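/- Let ℓ be differentiable, nondecreasing, nonnegative with marginal cost ℓ̂(x) = ℓ(x) + x ℓ'(x), and suppose ℓ̂(ε) ≥ γ·ℓ(ε) > 0 for some ε > 0 and γ > 1. Consider the Pigou-type network with demand r > ε: one edge with constant latency ℓ̂(ε), one edge with latency ℓ. The flow routing ε on the ℓ-edge and r−ε on the constant edge has average unfairness (ε ℓ(ε) + ℓ̂(ε)(r−ε))/(r ℓ(ε)) ≥ ε/r + (1−ε/r)γ, which tends to γ as r → ∞. -/

import Mathlib

/-- Lower-bound construction: in the Pigou-type network with edges ℓ and constant ℓ̂(ε),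
the optimal flow's average unfairness is at least ε/r + (1 - ε/r)γ, which tends to γ. -/
theorem stmt_17 (ℓ : ℝ → ℝ) (hdiff : Differentiable ℝ ℓ) (hmono : Monotone ℓ)
    (hnn : ∀ x : ℝ, 0 ≤ x → 0 ≤ ℓ x) (ε γ : ℝ) (hε : 0 < ε) (hγ : 1 < γ)
    (hpos : 0 < ℓ ε) (hsteep : γ * ℓ ε ≤ ℓ ε + ε * deriv ℓ ε) :
    (∀ r : ℝ, ε < r →
      ε / r + (1 - ε / r) * γ ≤
        (ε * ℓ ε + (ℓ ε + ε * deriv ℓ ε) * (r - ε)) / (r * ℓ ε)) ∧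
    Filter.Tendsto (fun r : ℝ => ε / r + (1 - ε / r) * γ) Filter.atTop (nhds γ) := by
  constructor
  · intro r hr
    have hr0 : 0 < r := hε.trans hr
    have hkey : ε / r + (1 - ε / r) * γ = (ε * ℓ ε + (γ * ℓ ε) * (r - ε)) / (r * ℓ ε) := by
      field_simp
    rw [hkey, div_le_div_iff_of_pos_right (by positivity)]
    nlinarith [hε.le, hr]
  · have h1 : Filter.Tendsto (fun r : ℝ => ε / r) Filter.atTop (nhds 0) :=
      Filter.Tendsto.div_atTop tendsto_const_nhds Filter.tendsto_id
    have h2 : Filter.Tendsto (fun r : ℝ => ε / r + (1 - ε / r) * γ) Filter.atTop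
        (nhds (0 + (1 - 0) * γ)) := by
      exact h1.add (((tendsto_const_nhds).sub h1).mul tendsto_const_nhds)
    simpa using h2
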